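/- Fix q ∈ [0,1] and suppose the score density f(·;q) is single-peaked with peak at q. Then E[|q - s| | (q,s) ∉ D] ≤ E[|q - ULG_T(s)| | (q,s) ∉ D], where D = {(q,s) : ULG_T(q) = ULG_T(s)}. -/

import Mathlib

open MeasureTheory Set

noncomputable def ULG (T : ℕ) (s : ℝ) : ℝ := ((⌊s * T⌋ : ℝ) + 1 / 2) / T

/-- Core reflection lemma: if `f u ≤ f (2m - u)` for `u ∈ [m, b]` where `m` is the
midpoint of `[a,b]`, then `∫ (s - m) f s ≤ 0` on `[a,b]`. -/
lemma core_refl (a b m : ℝ) (hm : 2 * m = a + b) (hab : a ≤ b) (f : ℝ → ℝ)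
    (hfi : IntervalIntegrable f volume a b)
    (hrefl : ∀ u ∈ Icc m b, f u ≤ f (2 * m - u)) :
    ∫ s in a..b, (s - m) * f s ≤ 0 := by
  have ham : a ≤ m := by linarith
  have hmb : m ≤ b := by linarith
  have hint : IntervalIntegrable (fun s => (s - m) * f s) volume a b :=
    hfi.continuousOn_mul ((continuous_id.sub continuous_const).continuousOn)
  have hsub1 : uIcc a m ⊆ uIcc a b := by
    rw [uIcc_of_le ham, uIcc_of_le hab]; exact Icc_subset_Icc le_rfl hmb
  have hsub2 : uIcc m b ⊆ uIcc a b := by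
    rw [uIcc_of_le hmb, uIcc_of_le hab]; exact Icc_subset_Icc ham le_rfl
  have h1 : IntervalIntegrable (fun s => (s - m) * f s) volume a m := hint.mono_set hsub1
  have h2 : IntervalIntegrable (fun s => (s - m) * f s) volume m b := hint.mono_set hsub2
  have hsplit : (∫ s in a..m, (s - m) * f s) + (∫ s in m..b, (s - m) * f s)
      = ∫ s in a..b, (s - m) * f s :=
    intervalIntegral.integral_add_adjacent_intervals h1 h2
  -- reflection of the left half
  have hcomp : ∫ x in m..b, (m - x) * f (2 * m - x) = ∫ s in a..m, (s - m) * f s := by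
    have h := intervalIntegral.integral_comp_sub_left (a := m) (b := b)
      (fun s => (s - m) * f s) (2 * m)
    have e1 : 2 * m - b = a := by linarith
    have e2 : 2 * m - m = m := by ring
    rw [e1, e2] at h
    rw [← h]
    congr 1
    funext x
    ring
  -- integrability of the reflected function on m..b
  have h2' : IntervalIntegrable (fun x => (m - x) * f (2 * m - x)) volume m b := by
    have := h1.comp_sub_left (2 * m)
    have e1 : 2 * m - a = b := by linarith
    have e2 : 2 * m - m = m := by ring
    rw [e1, e2] at this
    have := this.symm
    have heq : (fun x => (fun s => (s - m) * f s) (2 * m - x))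
        = fun x => (m - x) * f (2 * m - x) := by
      funext x; ring_nf
    rwa [heq] at this
  have key : 0 ≤ ∫ x in m..b, (x - m) * (f (2 * m - x) - f x) := by
    apply intervalIntegral.integral_nonneg hmb
    intro u hu
    exact mul_nonneg (by linarith [hu.1]) (by linarith [hrefl u hu])
  have hexp : ∫ x in m..b, (x - m) * (f (2 * m - x) - f x)
      = -((∫ x in m..b, (m - x) * f (2 * m - x)) + ∫ x in m..b, (x - m) * f x) := by
    rw [← intervalIntegral.integral_add h2' h2, ← intervalIntegral.integral_neg]
    congr 1
    funext x
    ring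
  rw [hexp] at key
  linarith [key, hsplit, hcomp]

/-- The per-interval comparison. -/
lemma step_ineq (T : ℕ) (hT : 1 ≤ T) (k : ℕ) (hk : k < T) (q : ℝ)
    (hq : q ∈ Icc (0 : ℝ) 1) (f : ℝ → ℝ)
    (hpeak : ∀ s s' : ℝ, (s ≤ s' ∧ s' ≤ q) ∨ (q ≤ s' ∧ s' ≤ s) → f s ≤ f s')
    (hfi : IntegrableOn f (Icc (0 : ℝ) 1) volume)
    (hne : (k : ℤ) ≠ ⌊q * T⌋) :
    (∫ s in Ico ((k : ℝ) / T) (((k : ℝ) + 1) / T), |q - s| * f s)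
      ≤ ∫ s in Ico ((k : ℝ) / T) (((k : ℝ) + 1) / T), |q - ULG T s| * f s := by
  have hTpos : (0 : ℝ) < T := by exact_mod_cast hT
  set a : ℝ := (k : ℝ) / T with ha
  set b : ℝ := ((k : ℝ) + 1) / T with hb
  set m : ℝ := ((k : ℝ) + 1 / 2) / T with hmdef
  have hab : a ≤ b := by
    rw [ha, hb, div_le_div_iff_of_pos_right hTpos]; linarith
  have hm2 : 2 * m = a + b := by field_simp [ha, hb, hmdef]; ring
  have ha0 : 0 ≤ a := div_nonneg (by positivity) hTpos.le
  have hb1 : b ≤ 1 := by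
    rw [hb, div_le_one hTpos]
    have : (k : ℝ) + 1 ≤ T := by exact_mod_cast hk
    linarith
  have hsub : Icc a b ⊆ Icc (0 : ℝ) 1 := Icc_subset_Icc ha0 hb1
  have hfI : IntervalIntegrable f volume a b := by
    rw [intervalIntegrable_iff, uIoc_of_le hab]
    exact hfi.mono_set (fun x hx => hsub ⟨hx.1.le, hx.2⟩)
  -- floor identification on Ico a b
  have hfloor : ∀ s ∈ Ico a b, ⌊s * (T : ℝ)⌋ = (k : ℤ) := by
    intro s hs
    rw [Int.floor_eq_iff]
    constructor
    · push_cast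
      calc (k : ℝ) = a * T := by rw [ha, div_mul_cancel₀ _ hTpos.ne']
        _ ≤ s * T := by exact mul_le_mul_of_nonneg_right hs.1 hTpos.le
    · push_cast
      calc s * (T : ℝ) < b * T := mul_lt_mul_of_pos_right hs.2 hTpos
        _ = (k : ℝ) + 1 := by rw [hb, div_mul_cancel₀ _ hTpos.ne']
  have hULG : ∀ s ∈ Ico a b, ULG T s = m := by
    intro s hs
    unfold ULG
    rw [hfloor s hs]
    push_cast
    rfl
  have hRHS : (∫ s in Ico a b, |q - ULG T s| * f s) = ∫ s in Ico a b, |q - m| * f s := by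
    apply setIntegral_congr_fun measurableSet_Ico
    intro s hs
    dsimp only
    rw [hULG s hs]
  rw [hRHS]
  -- position of q
  have hqT0 : (0 : ℝ) ≤ q * T := mul_nonneg hq.1 hTpos.le
  have hqcase : q < a ∨ b ≤ q := by
    rcases lt_or_gt_of_ne hne with h | h
    · right
      have h1 : (k : ℤ) + 1 ≤ ⌊q * (T : ℝ)⌋ := h
      have h2 : ((k : ℝ) + 1) ≤ q * (T : ℝ) := by
        calc ((k : ℝ) + 1) ≤ (⌊q * (T : ℝ)⌋ : ℝ) := by exact_mod_cast h1
          _ ≤ q * (T : ℝ) := Int.floor_le _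
      rw [hb, div_le_iff₀ hTpos]
      linarith
    · left
      have h1 : ⌊q * (T : ℝ)⌋ + 1 ≤ (k : ℤ) := h
      have h2 : q * (T : ℝ) < ⌊q * (T : ℝ)⌋ + 1 := Int.lt_floor_add_one _
      have h3 : q * (T : ℝ) < (k : ℝ) := by
        calc q * (T : ℝ) < (⌊q * (T : ℝ)⌋ : ℝ) + 1 := h2
          _ ≤ (k : ℝ) := by exact_mod_cast h1
      rw [ha, lt_div_iff₀ hTpos]
      exact h3
  have hICO : ∀ g : ℝ → ℝ, (∫ s in Ico a b, g s) = ∫ s in a..b, g s := by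
    intro g
    rw [intervalIntegral.integral_of_le hab, integral_Ico_eq_integral_Ioo,
      integral_Ioc_eq_integral_Ioo]
  rcases hqcase with hql | hqr
  · -- q left of the interval
    have hqm : q < m := by linarith
    have hL : (∫ s in Ico a b, |q - s| * f s) = ∫ s in Ico a b, (s - q) * f s := by
      apply setIntegral_congr_fun measurableSet_Ico
      intro s hs
      dsimp only
      rw [abs_sub_comm, abs_of_nonneg (by linarith [hs.1])]
    have hR : (∫ s in Ico a b, |q - m| * f s) = ∫ s in Ico a b, (m - q) * f s := by
      apply setIntegral_congr_fun measurableSet_Ico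
      intro s _
      dsimp only
      rw [abs_sub_comm, abs_of_nonneg (by linarith)]
    rw [hL, hR, hICO, hICO]
    have hcore : ∫ s in a..b, (s - m) * f s ≤ 0 := by
      apply core_refl a b m hm2 hab f hfI
      intro u hu
      exact hpeak u (2 * m - u) (Or.inr ⟨by linarith [hu.2], by linarith [hu.1]⟩)
    have h1 : IntervalIntegrable (fun s => (s - q) * f s) volume a b :=
      hfI.continuousOn_mul ((continuous_id.sub continuous_const).continuousOn)
    have h2 : IntervalIntegrable (fun s => (m - q) * f s) volume a b := hfI.const_mul _
    have hdiff : (∫ s in a..b, (m - q) * f s) - ∫ s in a..b, (s - q) * f s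
        = -∫ s in a..b, (s - m) * f s := by
      rw [← intervalIntegral.integral_sub h2 h1, ← intervalIntegral.integral_neg]
      congr 1
      funext s
      ring
    linarith [hdiff, hcore]
  · -- q right of the interval
    have hab' : a < b := by
      rw [ha, hb, div_lt_div_iff_of_pos_right hTpos]; linarith
    have hqm : m < q := by linarith
    have hL : (∫ s in Ico a b, |q - s| * f s) = ∫ s in Ico a b, (q - s) * f s := by
      apply setIntegral_congr_fun measurableSet_Ico
      intro s hs
      dsimp only
      rw [abs_of_nonneg (by linarith [hs.2])]
    have hR : (∫ s in Ico a b, |q - m| * f s) = ∫ s in Ico a b, (q - m) * f s := by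
      apply setIntegral_congr_fun measurableSet_Ico
      intro s _
      dsimp only
      rw [abs_of_nonneg (by linarith)]
    rw [hL, hR, hICO, hICO]
    have hcore : ∫ s in a..b, (s - m) * (-f s) ≤ 0 := by
      apply core_refl a b m hm2 hab (fun s => -f s) hfI.neg
      intro u hu
      simp only [neg_le_neg_iff]
      exact hpeak (2 * m - u) u (Or.inl ⟨by linarith [hu.1], by linarith [hu.2]⟩)
    have h1 : IntervalIntegrable (fun s => (q - s) * f s) volume a b :=
      hfI.continuousOn_mul ((continuous_const.sub continuous_id).continuousOn)
    have h2 : IntervalIntegrable (fun s => (q - m) * f s) volume a b := hfI.const_mul _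
    have hdiff : (∫ s in a..b, (q - m) * f s) - ∫ s in a..b, (q - s) * f s
        = -∫ s in a..b, (s - m) * (-f s) := by
      rw [← intervalIntegral.integral_sub h2 h1, ← intervalIntegral.integral_neg]
      congr 1
      funext s
      ring
    linarith [hdiff, hcore]

theorem conditional_dist_outside_D (T : ℕ) (hT : 1 ≤ T) (q : ℝ)
    (hq : q ∈ Icc (0 : ℝ) 1) (f : ℝ → ℝ)
    (hf0 : ∀ s ∈ Icc (0 : ℝ) 1, 0 ≤ f s)
    (hpeak : ∀ s s' : ℝ, (s ≤ s' ∧ s' ≤ q) ∨ (q ≤ s' ∧ s' ≤ s) → f s ≤ f s')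
    (hfi : IntegrableOn f (Icc (0 : ℝ) 1) volume)
    (h1i : IntegrableOn (fun s => |q - s| * f s) (Icc (0 : ℝ) 1) volume)
    (h2i : IntegrableOn (fun s => |q - ULG T s| * f s) (Icc (0 : ℝ) 1) volume)
    (hpos : 0 < ∫ s in {x ∈ Icc (0 : ℝ) 1 | ULG T x ≠ ULG T q}, f s) :
    (∫ s in {x ∈ Icc (0 : ℝ) 1 | ULG T x ≠ ULG T q}, |q - s| * f s) /
        (∫ s in {x ∈ Icc (0 : ℝ) 1 | ULG T x ≠ ULG T q}, f s) ≤
      (∫ s in {x ∈ Icc (0 : ℝ) 1 | ULG T x ≠ ULG T q}, |q - ULG T s| * f s) /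
        (∫ s in {x ∈ Icc (0 : ℝ) 1 | ULG T x ≠ ULG T q}, f s) := by
  have hTpos : (0 : ℝ) < T := by exact_mod_cast hT
  set S : Set ℝ := {x ∈ Icc (0 : ℝ) 1 | ULG T x ≠ ULG T q} with hS
  set F : Finset ℕ := (Finset.range T).filter (fun k => (k : ℤ) ≠ ⌊q * (T : ℝ)⌋) with hF
  set I : ℕ → Set ℝ := fun k => Ico ((k : ℝ) / T) (((k : ℝ) + 1) / T) with hI
  -- ULG equality iff floor equality
  have hULGne : ∀ x : ℝ, ⌊x * (T : ℝ)⌋ ≠ ⌊q * (T : ℝ)⌋ → ULG T x ≠ ULG T q := by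
    intro x hne heq
    apply hne
    unfold ULG at heq
    field_simp at heq
    have h3 : ⌊x * (T:ℝ)⌋ * 2 + 1 = 2 * ⌊(T:ℝ) * q⌋ + 1 := by exact_mod_cast heq
    rw [mul_comm (T:ℝ) q] at h3
    omega
  -- membership in pieces
  have hIsub : ∀ k ∈ F, I k ⊆ Icc (0 : ℝ) 1 := by
    intro k hk
    rw [hF, Finset.mem_filter, Finset.mem_range] at hk
    intro x hx
    have h1 : (0 : ℝ) ≤ (k : ℝ) / T := div_nonneg (by positivity) hTpos.le
    have h2 : ((k : ℝ) + 1) / T ≤ 1 := by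
      rw [div_le_one hTpos]
      have : (k : ℝ) + 1 ≤ T := by exact_mod_cast hk.1
      linarith
    exact ⟨le_trans h1 hx.1, le_trans hx.2.le h2⟩
  have hfloorI : ∀ k : ℕ, ∀ x ∈ I k, ⌊x * (T : ℝ)⌋ = (k : ℤ) := by
    intro k x hx
    rw [Int.floor_eq_iff]
    constructor
    · push_cast
      calc (k : ℝ) = ((k : ℝ) / T) * T := by field_simp
        _ ≤ x * T := mul_le_mul_of_nonneg_right hx.1 hTpos.le
    · push_cast
      calc x * (T : ℝ) < (((k : ℝ) + 1) / T) * T := mul_lt_mul_of_pos_right hx.2 hTpos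
        _ = (k : ℝ) + 1 := by field_simp
  -- U ⊆ S
  have hUS : (⋃ k ∈ F, I k) ⊆ S := by
    intro x hx
    simp only [mem_iUnion] at hx
    obtain ⟨k, hkF, hxk⟩ := hx
    have hkF' := hkF
    rw [hF, Finset.mem_filter, Finset.mem_range] at hkF'
    refine ⟨hIsub k hkF hxk, hULGne x ?_⟩
    rw [hfloorI k x hxk]
    exact hkF'.2
  -- S \ U ⊆ {1}
  have hSU : S \ (⋃ k ∈ F, I k) ⊆ {(1 : ℝ)} := by
    intro x ⟨⟨hx01, hxne⟩, hxU⟩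
    by_contra hx1
    have hx1' : x < 1 := lt_of_le_of_ne hx01.2 hx1
    have hxT0 : (0 : ℝ) ≤ x * T := mul_nonneg hx01.1 hTpos.le
    have hfl0 : (0 : ℤ) ≤ ⌊x * (T : ℝ)⌋ := Int.floor_nonneg.mpr hxT0
    set k : ℕ := ⌊x * (T : ℝ)⌋.toNat with hkdef
    have hkz : (k : ℤ) = ⌊x * (T : ℝ)⌋ := Int.toNat_of_nonneg hfl0
    have hkT : k < T := by
      have : x * (T : ℝ) < T := by
        calc x * (T : ℝ) < 1 * T := mul_lt_mul_of_pos_right hx1' hTpos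
          _ = T := one_mul _
      have hfl : ⌊x * (T : ℝ)⌋ < (T : ℤ) := by
        apply Int.floor_lt.mpr
        push_cast
        exact this
      omega
    have hkne : (k : ℤ) ≠ ⌊q * (T : ℝ)⌋ := by
      rw [hkz]
      intro h
      apply hxne
      unfold ULG
      rw [h]
    have hxI : x ∈ I k := by
      constructor
      · rw [div_le_iff₀ hTpos]
        calc (k : ℝ) = (⌊x * (T : ℝ)⌋ : ℝ) := by exact_mod_cast hkz
          _ ≤ x * T := Int.floor_le _
      · rw [lt_div_iff₀ hTpos]
        calc x * (T : ℝ) < (⌊x * (T : ℝ)⌋ : ℝ) + 1 := Int.lt_floor_add_one _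
          _ = (k : ℝ) + 1 := by
            congr 1
            exact_mod_cast hkz.symm
    apply hxU
    simp only [mem_iUnion]
    exact ⟨k, Finset.mem_filter.mpr ⟨Finset.mem_range.mpr hkT, hkne⟩, hxI⟩
  -- S =ᵐ U
  have hae : S =ᵐ[volume] ⋃ k ∈ F, I k := by
    rw [MeasureTheory.ae_eq_set]
    constructor
    · exact measure_mono_null hSU (measure_singleton 1)
    · rw [diff_eq_empty.mpr hUS]
      exact measure_empty
  -- disjointness
  have hdisj : Set.Pairwise (↑F) (Function.onFun Disjoint I) := by
    intro i _ j _ hij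
    have key : ∀ i j : ℕ, i < j → Disjoint (I i) (I j) := by
      intro i j h
      apply Set.disjoint_left.mpr
      intro x hxi hxj
      have h1 : x < ((i : ℝ) + 1) / T := hxi.2
      have h2 : (j : ℝ) / T ≤ x := hxj.1
      have h3 : ((i : ℝ) + 1) / T ≤ (j : ℝ) / T := by
        rw [div_le_div_iff_of_pos_right hTpos]
        exact_mod_cast h
      linarith
    rcases lt_or_gt_of_ne hij with h | h
    · exact key i j h
    · exact (key j i h).symm
  have hmeas : ∀ k ∈ F, MeasurableSet (I k) := fun k _ => measurableSet_Ico
  -- decompose integrals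
  have hdecomp : ∀ g : ℝ → ℝ, IntegrableOn g (Icc (0 : ℝ) 1) volume →
      (∫ s in S, g s) = ∑ k ∈ F, ∫ s in I k, g s := by
    intro g hg
    rw [setIntegral_congr_set hae]
    exact integral_biUnion_finset F hmeas hdisj
      (fun k hk => hg.mono_set (hIsub k hk))
  have hnum : (∫ s in S, |q - s| * f s) ≤ ∫ s in S, |q - ULG T s| * f s := by
    rw [hdecomp _ h1i, hdecomp _ h2i]
    apply Finset.sum_le_sum
    intro k hk
    rw [hF, Finset.mem_filter, Finset.mem_range] at hk
    exact step_ineq T hT k hk.1 q hq f hpeak hfi hk.2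
  exact (div_le_div_iff_of_pos_right hpos).mpr hnum
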